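/- arXiv:1011.4732 — 3 statements merged into one kernel-verified Lean document; each statement's English description precedes it below -/
import Mathlib

section
/- Let C_i > 0 with ∑_{i=1}^∞ C_i = κ < ∞, ζ > 0, and ξ_i > 0 strictly increasing. For each m, let C_i^{(m)} ∈ [0, C_i] with C_i^{(m)} = 0 for i > m and C_i^{(m)} → C_i as m → ∞ for each i, and set δ_m := κ − ∑_{i=1}^m C_i^{(m)}. Define W_ζ(x) = 1/ψ' − ∑_{i=1}^∞ C_i e^{-(ζ+ξ_i)x}, the upper bound \overline{W}^{(m)}(x) = 1/ψ' − ∑_{i=1}^m C_i^{(m)} e^{-(ζ+ξ_i)x}, and the lower bound \underline{W}^{(m)}(x) = \overline{W}^{(m)}(x) − δ_m [e^{-ζx} + e^{-(ζ+ξ_{m+1})x}]. Then for all x ≥ 0 and m ≥ 1, \underline{W}^{(m)}(x) ≤ W_ζ(x) ≤ \overline{W}^{(m)}(x). -/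
open Real Finset

/-- Finite-sum upper and lower bounds on the scale function `W_ζ`. Indices are
0-based: `C i` corresponds to `C_{i+1}` and, for the approximation of level `m`,
the terms `i < m` are used and `ξ m` plays the role of `ξ_{m+1}`. -/
theorem scale_function_finite_sum_bounds (ζ ψ' κ : ℝ) (hζ : 0 < ζ) (hψ' : 0 < ψ')
    (ξ C : ℕ → ℝ) (hξpos : ∀ i, 0 < ξ i) (hξmono : StrictMono ξ)
    (hCpos : ∀ i, 0 < C i) (hCsum : HasSum C κ)
    (Cm : ℕ → ℕ → ℝ)
    (hCm_le : ∀ m i, 0 ≤ Cm m i ∧ Cm m i ≤ C i)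
    (hCm_zero : ∀ m i, m ≤ i → Cm m i = 0)
    (δ : ℕ → ℝ) (hδ : ∀ m, δ m = κ - ∑ i ∈ Finset.range m, Cm m i)
    (Wζ : ℝ → ℝ)
    (hWζ : ∀ x, Wζ x = 1 / ψ' - ∑' i, C i * Real.exp (-(ζ + ξ i) * x))
    (Wup Wlo : ℕ → ℝ → ℝ)
    (hWup : ∀ m x, Wup m x = 1 / ψ' - ∑ i ∈ Finset.range m, Cm m i * Real.exp (-(ζ + ξ i) * x))
    (hWlo : ∀ m x, Wlo m x =
      Wup m x - δ m * (Real.exp (-ζ * x) + Real.exp (-(ζ + ξ m) * x))) :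
    ∀ (m : ℕ) (x : ℝ), 1 ≤ m → 0 ≤ x → Wlo m x ≤ Wζ x ∧ Wζ x ≤ Wup m x := by
  intro m x hm hx
  have hexp_le : ∀ a b : ℝ, a ≤ b → Real.exp (-b * x) ≤ Real.exp (-a * x) := by
    intro a b hab
    exact Real.exp_le_exp.2 (by nlinarith)
  set f : ℕ → ℝ := fun i => C i * Real.exp (-(ζ + ξ i) * x) with hf
  have hfnn : ∀ i, 0 ≤ f i := fun i => mul_nonneg (hCpos i).le (Real.exp_pos _).le
  have hfle : ∀ i, f i ≤ C i := by
    intro i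
    have h1 : Real.exp (-(ζ + ξ i) * x) ≤ 1 := by
      apply Real.exp_le_one_iff.2
      nlinarith [hξpos i]
    calc f i ≤ C i * 1 := mul_le_mul_of_nonneg_left h1 (hCpos i).le
      _ = C i := mul_one _
  have hfs : Summable f := Summable.of_nonneg_of_le hfnn hfle hCsum.summable
  -- upper bound
  have h1 : ∑ i ∈ Finset.range m, Cm m i * Real.exp (-(ζ + ξ i) * x) ≤ ∑' i, f i := by
    calc ∑ i ∈ Finset.range m, Cm m i * Real.exp (-(ζ + ξ i) * x)
        ≤ ∑ i ∈ Finset.range m, f i :=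
          Finset.sum_le_sum fun i _ =>
            mul_le_mul_of_nonneg_right (hCm_le m i).2 (Real.exp_pos _).le
      _ ≤ ∑' i, f i := Summable.sum_le_tsum _ (fun i _ => hfnn i) hfs
  have hupper : Wζ x ≤ Wup m x := by
    rw [hWζ, hWup]; linarith
  refine ⟨?_, hupper⟩
  -- lower bound
  have hsplitf : ∑ i ∈ Finset.range m, f i + ∑' i, f (i + m) = ∑' i, f i :=
    Summable.sum_add_tsum_nat_add m hfs
  have hsplitC : ∑ i ∈ Finset.range m, C i + ∑' i, C (i + m) = κ := by
    rw [Summable.sum_add_tsum_nat_add m hCsum.summable, hCsum.tsum_eq]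
  set S : ℝ := ∑ i ∈ Finset.range m, (C i - Cm m i) with hS
  set T : ℝ := ∑' i, C (i + m) with hT
  have hSnn : 0 ≤ S := Finset.sum_nonneg fun i _ => by linarith [(hCm_le m i).2]
  have hTnn : 0 ≤ T := tsum_nonneg fun i => (hCpos _).le
  have hδm : δ m = S + T := by
    rw [hδ, hS, Finset.sum_sub_distrib]
    linarith
  set A : ℝ := Real.exp (-ζ * x) with hA
  set B : ℝ := Real.exp (-(ζ + ξ m) * x) with hB
  have hApos : 0 < A := Real.exp_pos _
  have hBpos : 0 < B := Real.exp_pos _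
  -- head estimate
  have hhead : ∑ i ∈ Finset.range m, f i ≤
      (∑ i ∈ Finset.range m, Cm m i * Real.exp (-(ζ + ξ i) * x)) + S * A := by
    rw [hS, Finset.sum_mul, ← Finset.sum_add_distrib]
    apply Finset.sum_le_sum
    intro i _
    have he : Real.exp (-(ζ + ξ i) * x) ≤ A := hexp_le ζ (ζ + ξ i) (by linarith [hξpos i])
    have hci : 0 ≤ C i - Cm m i := by linarith [(hCm_le m i).2]
    have : (C i - Cm m i) * Real.exp (-(ζ + ξ i) * x) ≤ (C i - Cm m i) * A :=
      mul_le_mul_of_nonneg_left he hci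
    simp only [hf]
    nlinarith
  -- tail estimate
  have htails : Summable (fun i => C (i + m)) :=
    (summable_nat_add_iff m).2 hCsum.summable
  have hfts : Summable (fun i => f (i + m)) := (summable_nat_add_iff m).2 hfs
  have hgts : Summable (fun i => C (i + m) * B) := htails.mul_right B
  have key : ∀ i, f (i + m) ≤ C (i + m) * B := by
    intro i
    have hm' : ξ m ≤ ξ (i + m) := hξmono.monotone (Nat.le_add_left m i)
    have he : Real.exp (-(ζ + ξ (i + m)) * x) ≤ B := hexp_le (ζ + ξ m) (ζ + ξ (i + m)) (by linarith)
    exact mul_le_mul_of_nonneg_left he (hCpos _).le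
  have htail : ∑' i, f (i + m) ≤ T * B := by
    calc ∑' i, f (i + m) ≤ ∑' i, C (i + m) * B := Summable.tsum_le_tsum key hfts hgts
      _ = T * B := by rw [hT, tsum_mul_right]
  have hcross : S * A + T * B ≤ δ m * (A + B) := by
    rw [hδm]; nlinarith [mul_nonneg hSnn hBpos.le, mul_nonneg hTnn hApos.le]
  rw [hWlo, hWζ, hWup]
  have : ∑' i, f i ≤ (∑ i ∈ Finset.range m, Cm m i * Real.exp (-(ζ + ξ i) * x)) + δ m * (A + B) := by
    rw [← hsplitf]; linarith
  linarith
end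

section
/- With the same notation, if δ_m → 0 as m → ∞, then for any x_0 > 0, \underline{w}^{(m)} → W' and \overline{w}^{(m)} → W' uniformly on [x_0, ∞). -/
open Real Finset Set Filter

lemma aux_exp_bound {lam x x₀ : ℝ} (hlam : 0 ≤ lam) (hx₀ : 0 < x₀) (hx : x₀ ≤ x) :
    lam * Real.exp (-lam * x) ≤ 1 / (Real.exp 1 * x₀) := by
  have h1 : lam * Real.exp (-lam * x) ≤ lam * Real.exp (-lam * x₀) := by
    apply mul_le_mul_of_nonneg_left _ hlam
    apply Real.exp_le_exp.mpr
    nlinarith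
  refine h1.trans ?_
  set t := lam * x₀ with ht
  have ht0 : 0 ≤ t := by positivity
  have he : (0:ℝ) < Real.exp 1 := Real.exp_pos 1
  have het : (0:ℝ) < Real.exp t := Real.exp_pos t
  have h2 : t * Real.exp 1 ≤ Real.exp t := by
    have := Real.add_one_le_exp (t - 1)
    rw [Real.exp_sub] at this
    have h3 : (t - 1 + 1) * Real.exp 1 ≤ Real.exp t / Real.exp 1 * Real.exp 1 :=
      mul_le_mul_of_nonneg_right this he.le
    rw [div_mul_cancel₀] at h3
    · linarith
    · exact he.ne'
  have h4 : t * Real.exp (-t) ≤ 1 / Real.exp 1 := by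
    rw [Real.exp_neg, ← div_eq_mul_inv, div_le_div_iff₀ het he]
    linarith
  have hlx : -lam * x₀ = -t := by rw [ht]; ring
  rw [hlx]
  have h5 : lam * Real.exp (-t) = t * Real.exp (-t) / x₀ := by
    rw [ht]; field_simp
  rw [h5, ← div_div]
  gcongr

/-- If `δ_m → 0`, the finite-sum bounds on the derivative of the scale function
converge to it uniformly on `[x₀,∞)` for every `x₀ > 0`. -/
theorem scale_function_deriv_bounds_uniform_convergence (K ζ κ : ℝ) (hK : 0 < K) (hζ : 0 < ζ)
    (ξ C : ℕ → ℝ) (hξpos : ∀ i, 0 < ξ i) (hξmono : StrictMono ξ)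
    (hCpos : ∀ i, 0 < C i) (hCsum : HasSum C κ)
    (hsum : ∀ x : ℝ, 0 < x → Summable (fun i => C i * ξ i * Real.exp (-ξ i * x)))
    (Cm : ℕ → ℕ → ℝ)
    (hCm_le : ∀ m i, 0 ≤ Cm m i ∧ Cm m i ≤ C i)
    (hCm_zero : ∀ m i, m ≤ i → Cm m i = 0)
    (δ : ℕ → ℝ) (hδ : ∀ m, δ m = κ - ∑ i ∈ Finset.range m, Cm m i)
    (hδ0 : Filter.Tendsto δ Filter.atTop (nhds 0))
    (W' : ℝ → ℝ)
    (hW' : ∀ x, W' x = K * ζ * Real.exp (ζ * x) + ∑' i, C i * ξ i * Real.exp (-ξ i * x))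
    (wlo wup : ℕ → ℝ → ℝ)
    (hwlo : ∀ m x, wlo m x =
      K * ζ * Real.exp (ζ * x) + ∑ i ∈ Finset.range m, Cm m i * ξ i * Real.exp (-ξ i * x))
    (hwup : ∀ m x, wup m x = wlo m x +
      (sSup ((fun k => ξ k * Real.exp (-ξ k * x)) '' {k : ℕ | k < m}) +
       sSup ((fun k => ξ k * Real.exp (-ξ k * x)) '' {k : ℕ | m ≤ k})) * δ m) :
    ∀ x₀ : ℝ, 0 < x₀ →
      TendstoUniformlyOn (fun m x => wlo m x) W' Filter.atTop (Set.Ici x₀) ∧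
      TendstoUniformlyOn (fun m x => wup m x) W' Filter.atTop (Set.Ici x₀) := by
  intro x₀ hx₀
  set c : ℝ := 1 / (Real.exp 1 * x₀) with hc
  have hcpos : 0 < c := by positivity
  have hC : Summable C := hCsum.summable
  have hκ : ∑' i, C i = κ := hCsum.tsum_eq
  have hδnonneg : ∀ m, 0 ≤ δ m := by
    intro m
    rw [hδ]
    have h1 : ∑ i ∈ Finset.range m, Cm m i ≤ ∑ i ∈ Finset.range m, C i :=
      Finset.sum_le_sum fun i _ => (hCm_le m i).2
    have h2 : ∑ i ∈ Finset.range m, C i ≤ κ := by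
      rw [← hκ]
      exact Summable.sum_le_tsum (Finset.range m) (fun i _ => (hCpos i).le) hC
    linarith
  have key : ∀ m, ∀ x ∈ Set.Ici x₀, dist (W' x) (wlo m x) ≤ c * δ m := by
    intro m x hx
    have hxpos : 0 < x := lt_of_lt_of_le hx₀ hx
    have hf : Summable (fun i => C i * ξ i * Real.exp (-ξ i * x)) := hsum x hxpos
    have hg : Summable (fun i => Cm m i * ξ i * Real.exp (-ξ i * x)) := by
      apply summable_of_ne_finset_zero (s := Finset.range m)
      intro i hi
      rw [hCm_zero m i (by simpa using hi)]
      ring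
    have hgsum : ∑' i, Cm m i * ξ i * Real.exp (-ξ i * x)
        = ∑ i ∈ Finset.range m, Cm m i * ξ i * Real.exp (-ξ i * x) := by
      apply tsum_eq_sum
      intro i hi
      rw [hCm_zero m i (by simpa using hi)]; ring
    have hCm' : Summable (fun i => Cm m i) := by
      apply summable_of_ne_finset_zero (s := Finset.range m)
      intro i hi; exact hCm_zero m i (by simpa using hi)
    have hδm : δ m = ∑' i, (C i - Cm m i) := by
      have h2 : ∑' i, (C i - Cm m i) = κ - ∑ i ∈ Finset.range m, Cm m i := by
        rw [Summable.tsum_sub hC hCm', hκ,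
          tsum_eq_sum (s := Finset.range m) (fun i hi => hCm_zero m i (by simpa using hi))]
      exact (hδ m).trans h2.symm
    have hdiff : W' x - wlo m x
        = ∑' i, (C i * ξ i * Real.exp (-ξ i * x) - Cm m i * ξ i * Real.exp (-ξ i * x)) := by
      rw [hW', hwlo, Summable.tsum_sub hf hg, hgsum]; ring
    have hbound : ∑' i, (C i * ξ i * Real.exp (-ξ i * x) - Cm m i * ξ i * Real.exp (-ξ i * x))
        ≤ ∑' i, (C i - Cm m i) * c := by
      apply Summable.tsum_le_tsum _ (hf.sub hg) ((hC.sub hCm').mul_right c)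
      intro i
      have h1 : C i * ξ i * Real.exp (-ξ i * x) - Cm m i * ξ i * Real.exp (-ξ i * x)
          = (C i - Cm m i) * (ξ i * Real.exp (-ξ i * x)) := by ring
      rw [h1]
      apply mul_le_mul_of_nonneg_left (aux_exp_bound (hξpos i).le hx₀ hx)
      linarith [(hCm_le m i).2]
    have hnn : 0 ≤ W' x - wlo m x := by
      rw [hdiff]
      apply tsum_nonneg
      intro i
      have h3 := (hCm_le m i).2
      have h2 : 0 ≤ ξ i * Real.exp (-ξ i * x) := mul_nonneg (hξpos i).le (Real.exp_nonneg _)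
      nlinarith
    rw [Real.dist_eq, abs_of_nonneg hnn, hdiff]
    calc _ ≤ ∑' i, (C i - Cm m i) * c := hbound
      _ = δ m * c := by rw [hδm, tsum_mul_right]
      _ = c * δ m := mul_comm _ _
  have hsupub : ∀ (s : Set ℕ) (x : ℝ), x₀ ≤ x →
      sSup ((fun k => ξ k * Real.exp (-ξ k * x)) '' s) ≤ c := by
    intro s x hx
    apply Real.sSup_le
    · rintro y ⟨k, -, rfl⟩
      exact aux_exp_bound (hξpos k).le hx₀ hx
    · exact hcpos.le
  have hsupnn : ∀ (s : Set ℕ) (x : ℝ),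
      0 ≤ sSup ((fun k => ξ k * Real.exp (-ξ k * x)) '' s) := by
    intro s x
    apply Real.sSup_nonneg
    rintro y ⟨k, -, rfl⟩
    exact mul_nonneg (hξpos k).le (Real.exp_nonneg _)
  have key2 : ∀ m, ∀ x ∈ Set.Ici x₀, dist (W' x) (wup m x) ≤ 3 * c * δ m := by
    intro m x hx
    have h1 : dist (wlo m x) (wup m x) ≤ 2 * c * δ m := by
      rw [Real.dist_eq, hwup]
      have hs1 := hsupub {k : ℕ | k < m} x hx
      have hs2 := hsupub {k : ℕ | m ≤ k} x hx
      have hn1 := hsupnn {k : ℕ | k < m} x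
      have hn2 := hsupnn {k : ℕ | m ≤ k} x
      have hd := hδnonneg m
      rw [abs_sub_comm]
      rw [show wlo m x +
          (sSup ((fun k => ξ k * Real.exp (-ξ k * x)) '' {k : ℕ | k < m}) +
           sSup ((fun k => ξ k * Real.exp (-ξ k * x)) '' {k : ℕ | m ≤ k})) * δ m - wlo m x
        = (sSup ((fun k => ξ k * Real.exp (-ξ k * x)) '' {k : ℕ | k < m}) +
           sSup ((fun k => ξ k * Real.exp (-ξ k * x)) '' {k : ℕ | m ≤ k})) * δ m from by ring]
      rw [abs_of_nonneg (mul_nonneg (by linarith) hd)]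
      nlinarith
    calc dist (W' x) (wup m x) ≤ dist (W' x) (wlo m x) + dist (wlo m x) (wup m x) :=
        dist_triangle _ _ _
      _ ≤ c * δ m + 2 * c * δ m := add_le_add (key m x hx) h1
      _ = 3 * c * δ m := by ring
  have hδ3 : Tendsto (fun m => 3 * c * δ m) atTop (nhds 0) := by
    simpa using hδ0.const_mul (3 * c)
  constructor
  · rw [Metric.tendstoUniformlyOn_iff]
    intro ε hε
    filter_upwards [hδ3.eventually_lt_const hε] with m hm x hx
    calc dist (W' x) (wlo m x) ≤ c * δ m := key m x hx
      _ ≤ 3 * c * δ m := by nlinarith [hδnonneg m, hcpos]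
      _ < ε := hm
  · rw [Metric.tendstoUniformlyOn_iff]
    intro ε hε
    filter_upwards [hδ3.eventually_lt_const hε] with m hm x hx
    exact lt_of_le_of_lt (key2 m x hx) hm
end

section
/- Let ψ(s) = μs + (1/2)σ²s² − λ ∑_{i=1}^m α_i s/(η_i + s) with σ > 0, λ > 0, α_i > 0 summing to 1, and 0 < η_1 < ⋯ < η_m. Then for every q > 0 the equation ψ(s) = q, viewed on the negative real axis, has exactly m+1 roots −ξ_1 > −η_1 > −ξ_2 > ⋯ > −η_m > −ξ_{m+1}, i.e. the positive numbers ξ_1, …, ξ_{m+1} satisfy 0 < ξ_1 < η_1 < ξ_2 < ⋯ < η_m < ξ_{m+1} < ∞. -/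
open Real Finset Filter Topology Polynomial

lemma hyexp_cont (m : ℕ) (μ σ lam : ℝ) (α η : Fin m → ℝ) {s₀ : ℝ} (h : ∀ i, η i + s₀ ≠ 0) :
    ContinuousAt (fun s => μ * s + σ ^ 2 * s ^ 2 / 2 - lam * ∑ i, α i * s / (η i + s)) s₀ := by
  apply ContinuousAt.sub (by fun_prop)
  apply ContinuousAt.mul continuousAt_const
  exact tendsto_finset_sum _ fun i _ => ContinuousAt.div (by fun_prop) (by fun_prop) (h i)

lemma hyexp_split (m : ℕ) (μ σ lam : ℝ) (α η : Fin m → ℝ) (i : Fin m) (s : ℝ) :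
    μ * s + σ ^ 2 * s ^ 2 / 2 - lam * ∑ j, α j * s / (η j + s)
      = (μ * s + σ ^ 2 * s ^ 2 / 2 - lam * ∑ j ∈ univ.erase i, α j * s / (η j + s))
        - (lam * α i) * (s * (η i + s)⁻¹) := by
  rw [← Finset.add_sum_erase _ _ (mem_univ i)]
  ring

lemma hyexp_erase_cont (m : ℕ) (μ σ lam : ℝ) (α η : Fin m → ℝ) (i : Fin m)
    (hηmono : StrictMono η) :
    ContinuousAt
      (fun s => μ * s + σ ^ 2 * s ^ 2 / 2 - lam * ∑ j ∈ univ.erase i, α j * s / (η j + s))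
      (-η i) := by
  have hne : ∀ j ∈ univ.erase i, η j + (-η i) ≠ 0 := by
    intro j hj
    have : η j ≠ η i := fun h => (Finset.mem_erase.1 hj).1 (hηmono.injective h)
    intro h0; apply this; linarith
  apply ContinuousAt.sub (by fun_prop)
  apply ContinuousAt.mul continuousAt_const
  exact tendsto_finset_sum _ fun j hj => ContinuousAt.div (by fun_prop) (by fun_prop) (hne j hj)

lemma hyexp_pole_right (m : ℕ) (μ σ lam : ℝ) (hlam : 0 < lam)
    (α : Fin m → ℝ) (hα : ∀ i, 0 < α i)
    (η : Fin m → ℝ) (hηpos : ∀ i, 0 < η i) (hηmono : StrictMono η) (i : Fin m) :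
    Tendsto (fun s => μ * s + σ ^ 2 * s ^ 2 / 2 - lam * ∑ j, α j * s / (η j + s))
      (𝓝[>] (-η i)) atTop := by
  have hcont := hyexp_erase_cont m μ σ lam α η i hηmono
  have hinv : Tendsto (fun s : ℝ => (η i + s)⁻¹) (𝓝[>] (-η i)) atTop := by
    apply Filter.Tendsto.inv_tendsto_nhdsGT_zero
    rw [tendsto_nhdsWithin_iff]
    constructor
    · have : Tendsto (fun s : ℝ => η i + s) (𝓝 (-η i)) (𝓝 0) := by
        have h1 : ContinuousAt (fun s : ℝ => η i + s) (-η i) := by fun_prop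
        simpa [ContinuousAt] using h1
      exact this.mono_left nhdsWithin_le_nhds
    · filter_upwards [self_mem_nhdsWithin] with s hs
      simp only [Set.mem_Ioi] at hs ⊢; linarith
  have hmul : Tendsto (fun s : ℝ => s * (η i + s)⁻¹) (𝓝[>] (-η i)) atBot := by
    apply Filter.Tendsto.neg_mul_atTop (C := -η i) (by linarith [hηpos i]) _ hinv
    exact tendsto_id.mono_left nhdsWithin_le_nhds
  have hmul1 : Tendsto (fun s : ℝ => (lam * α i) * (s * (η i + s)⁻¹)) (𝓝[>] (-η i)) atBot :=
    hmul.const_mul_atBot (mul_pos hlam (hα i))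
  have hmul2 : Tendsto (fun s : ℝ => -((lam * α i) * (s * (η i + s)⁻¹))) (𝓝[>] (-η i)) atTop :=
    tendsto_neg_atBot_atTop.comp hmul1
  have := (hcont.mono_left nhdsWithin_le_nhds).add_atTop hmul2
  apply this.congr
  intro s
  rw [hyexp_split m μ σ lam α η i s]; ring

lemma hyexp_pole_left (m : ℕ) (μ σ lam : ℝ) (hlam : 0 < lam)
    (α : Fin m → ℝ) (hα : ∀ i, 0 < α i)
    (η : Fin m → ℝ) (hηpos : ∀ i, 0 < η i) (hηmono : StrictMono η) (i : Fin m) :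
    Tendsto (fun s => μ * s + σ ^ 2 * s ^ 2 / 2 - lam * ∑ j, α j * s / (η j + s))
      (𝓝[<] (-η i)) atBot := by
  have hcont := hyexp_erase_cont m μ σ lam α η i hηmono
  have hinv : Tendsto (fun s : ℝ => (-(η i + s))⁻¹) (𝓝[<] (-η i)) atTop := by
    apply Filter.Tendsto.inv_tendsto_nhdsGT_zero
    rw [tendsto_nhdsWithin_iff]
    constructor
    · have : Tendsto (fun s : ℝ => -(η i + s)) (𝓝 (-η i)) (𝓝 0) := by
        have h1 : ContinuousAt (fun s : ℝ => -(η i + s)) (-η i) := by fun_prop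
        simpa [ContinuousAt] using h1
      exact this.mono_left nhdsWithin_le_nhds
    · filter_upwards [self_mem_nhdsWithin] with s hs
      simp only [Set.mem_Iio] at hs; simp only [Set.mem_Ioi]; linarith
  have hmul : Tendsto (fun s : ℝ => s * (-(η i + s))⁻¹) (𝓝[<] (-η i)) atBot := by
    apply Filter.Tendsto.neg_mul_atTop (C := -η i) (by linarith [hηpos i]) _ hinv
    exact tendsto_id.mono_left nhdsWithin_le_nhds
  have hmul2 : Tendsto (fun s : ℝ => (lam * α i) * (s * (-(η i + s))⁻¹)) (𝓝[<] (-η i)) atBot :=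
    hmul.const_mul_atBot (mul_pos hlam (hα i))
  have := (hcont.mono_left nhdsWithin_le_nhds).add_atBot hmul2
  apply this.congr
  intro s
  rw [hyexp_split m μ σ lam α η i s, inv_neg]
  ring


lemma hyexp_quad_atBot (μ c : ℝ) {σ : ℝ} (hσ : 0 < σ) :
    Tendsto (fun s : ℝ => μ * s + σ ^ 2 * s ^ 2 / 2 - c) atBot atTop := by
  have h1 : Tendsto (fun s : ℝ => μ + σ ^ 2 / 2 * s) atBot atBot := by
    apply tendsto_atBot_add_const_left
    exact tendsto_id.const_mul_atBot (by positivity)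
  have h2 : Tendsto (fun s : ℝ => s * (μ + σ ^ 2 / 2 * s)) atBot atTop :=
    Filter.tendsto_id.atBot_mul_atBot₀ h1
  have h3 := tendsto_atTop_add_const_right atBot (-c) h2
  apply h3.congr
  intro s; ring

lemma hyexp_quad_atTop (μ c : ℝ) {σ : ℝ} (hσ : 0 < σ) :
    Tendsto (fun s : ℝ => μ * s + σ ^ 2 * s ^ 2 / 2 - c) atTop atTop := by
  have h1 : Tendsto (fun s : ℝ => μ + σ ^ 2 / 2 * s) atTop atTop := by
    apply tendsto_atTop_add_const_left
    exact tendsto_id.const_mul_atTop (by positivity)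
  have h2 : Tendsto (fun s : ℝ => s * (μ + σ ^ 2 / 2 * s)) atTop atTop :=
    Filter.tendsto_id.atTop_mul_atTop₀ h1
  have h3 := tendsto_atTop_add_const_right atTop (-c) h2
  apply h3.congr
  intro s; ring

lemma hyexp_atBot (m : ℕ) (μ lam : ℝ) {σ : ℝ} (hσ : 0 < σ) (hlam : 0 < lam)
    (α : Fin m → ℝ) (hα : ∀ i, 0 < α i) (hαsum : ∑ i, α i = 1)
    (η : Fin m → ℝ) (hηpos : ∀ i, 0 < η i) :
    Tendsto (fun s => μ * s + σ ^ 2 * s ^ 2 / 2 - lam * ∑ i, α i * s / (η i + s))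
      atBot atTop := by
  apply tendsto_atTop_mono' _ _ (hyexp_quad_atBot μ (2 * lam) hσ)
  have hev : ∀ᶠ s : ℝ in atBot, ∀ i : Fin m, s ≤ -2 * η i :=
    eventually_all.2 fun i => eventually_le_atBot _
  filter_upwards [hev] with s hs
  have hsum : ∑ i, α i * s / (η i + s) ≤ 2 := by
    calc ∑ i, α i * s / (η i + s) ≤ ∑ i, 2 * α i := by
          apply Finset.sum_le_sum
          intro i _
          have h1 : η i + s < 0 := by have := hs i; have := hηpos i; linarith
          rw [mul_div_assoc]
          have h2 : s / (η i + s) ≤ 2 := by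
            rw [div_le_iff_of_neg h1]; linarith [hs i]
          have := mul_le_mul_of_nonneg_left h2 (hα i).le
          linarith
      _ = 2 := by rw [← Finset.mul_sum, hαsum, mul_one]
  have : lam * ∑ i, α i * s / (η i + s) ≤ lam * 2 := by
    exact mul_le_mul_of_nonneg_left hsum hlam.le
  nlinarith

lemma hyexp_atTop (m : ℕ) (μ lam : ℝ) {σ : ℝ} (hσ : 0 < σ) (hlam : 0 < lam)
    (α : Fin m → ℝ) (hα : ∀ i, 0 < α i) (hαsum : ∑ i, α i = 1)
    (η : Fin m → ℝ) (hηpos : ∀ i, 0 < η i) :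
    Tendsto (fun s => μ * s + σ ^ 2 * s ^ 2 / 2 - lam * ∑ i, α i * s / (η i + s))
      atTop atTop := by
  apply tendsto_atTop_mono' _ _ (hyexp_quad_atTop μ lam hσ)
  filter_upwards [eventually_ge_atTop (0 : ℝ)] with s hs
  have hsum : ∑ i, α i * s / (η i + s) ≤ 1 := by
    calc ∑ i, α i * s / (η i + s) ≤ ∑ i, α i := by
          apply Finset.sum_le_sum
          intro i _
          have h1 : 0 < η i + s := by have := hηpos i; linarith
          rw [mul_div_assoc]
          have h2 : s / (η i + s) ≤ 1 := by
            rw [div_le_iff₀ h1]; linarith [hηpos i]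
          have := mul_le_mul_of_nonneg_left h2 (hα i).le
          linarith
      _ = 1 := hαsum
  have : lam * ∑ i, α i * s / (η i + s) ≤ lam * 1 :=
    mul_le_mul_of_nonneg_left hsum hlam.le
  nlinarith


noncomputable def hyexpP (m : ℕ) (μ σ lam q : ℝ) (α η : Fin m → ℝ) : Polynomial ℝ :=
  (C (σ ^ 2 / 2) * X ^ 2 + C μ * X - C q) * ∏ i, (X + C (η i))
    - C lam * ∑ i, C (α i) * X * ∏ j ∈ univ.erase i, (X + C (η j))

lemma hyexpP_eval (m : ℕ) (μ σ lam q : ℝ) (α η : Fin m → ℝ) (s : ℝ) :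
    (hyexpP m μ σ lam q α η).eval s
      = (σ ^ 2 / 2 * s ^ 2 + μ * s - q) * ∏ i, (s + η i)
        - lam * ∑ i, α i * s * ∏ j ∈ univ.erase i, (s + η j) := by
  simp [hyexpP, eval_prod, eval_finset_sum]

lemma hyexpP_root (m : ℕ) (μ σ lam q : ℝ) (α η : Fin m → ℝ) (s : ℝ)
    (h : ∀ i, η i + s ≠ 0)
    (hs : μ * s + σ ^ 2 * s ^ 2 / 2 - lam * ∑ i, α i * s / (η i + s) = q) :
    (hyexpP m μ σ lam q α η).eval s = 0 := by
  rw [hyexpP_eval]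
  have e1 : ∀ i : Fin m, α i * s * ∏ j ∈ univ.erase i, (s + η j)
      = (α i * s / (η i + s)) * ∏ j, (s + η j) := by
    intro i
    rw [← Finset.mul_prod_erase univ _ (mem_univ i)]
    field_simp [h i]
    ring
  rw [Finset.sum_congr rfl fun i _ => e1 i, ← Finset.sum_mul]
  have : (σ ^ 2 / 2 * s ^ 2 + μ * s - q)
      = lam * ∑ i, α i * s / (η i + s) := by linarith [hs]
  rw [this, mul_assoc]
  ring

lemma hyexpP_eval_zero (m : ℕ) (μ σ lam q : ℝ) (hq : 0 < q) (α η : Fin m → ℝ)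
    (hηpos : ∀ i, 0 < η i) :
    (hyexpP m μ σ lam q α η).eval 0 ≠ 0 := by
  rw [hyexpP_eval]
  have h2 : (0:ℝ) < ∏ i : Fin m, η i := Finset.prod_pos fun i _ => hηpos i
  have h1 : ∏ i : Fin m, ((0:ℝ) + η i) = ∏ i, η i := by simp
  simp only [mul_zero, zero_mul, zero_add, h1, ne_eq, Finset.sum_const_zero]
  intro hc
  nlinarith [h2, hq]

lemma hyexpP_natDegree (m : ℕ) (μ σ lam q : ℝ) (α η : Fin m → ℝ) :
    (hyexpP m μ σ lam q α η).natDegree ≤ m + 2 := by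
  apply le_trans (natDegree_sub_le _ _)
  apply max_le
  · apply le_trans (natDegree_mul_le)
    have h1 : (C (σ ^ 2 / 2) * X ^ 2 + C μ * X - C q : Polynomial ℝ).natDegree ≤ 2 := by
      compute_degree
    have h2 : (∏ i : Fin m, (X + C (η i)) : Polynomial ℝ).natDegree ≤ m := by
      apply le_trans (natDegree_prod_le _ _)
      apply le_trans (Finset.sum_le_sum fun i (_ : i ∈ univ) => le_of_eq (natDegree_X_add_C (η i)))
      simp
    omega
  · apply le_trans (natDegree_mul_le)
    have h2 : ((∑ i, C (α i) * X * ∏ j ∈ univ.erase i, (X + C (η j))) : Polynomial ℝ).natDegree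
        ≤ m + 2 := by
      apply natDegree_sum_le_of_forall_le
      intro i _
      apply le_trans (natDegree_mul_le)
      have ha : (C (α i) * X : Polynomial ℝ).natDegree ≤ 1 := by compute_degree
      have hb : ((∏ j ∈ univ.erase i, (X + C (η j))) : Polynomial ℝ).natDegree ≤ m := by
        apply le_trans (natDegree_prod_le _ _)
        apply le_trans (Finset.sum_le_sum fun j (_ : j ∈ univ.erase i) => le_of_eq (natDegree_X_add_C (η j)))
        apply le_trans (Finset.sum_le_sum_of_subset (Finset.erase_subset i univ))
        · simp
        
      omega
    simp only [natDegree_C, zero_add]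
    omega


set_option maxHeartbeats 1000000 in
/-- For the Laplace exponent of a Brownian motion plus a hyperexponential compound
Poisson process (`σ > 0`), the Cramér–Lundberg equation `ψ(s) = q` has exactly `m+1`
roots on the negative half-line, interlacing with the poles `−η_i`. -/
theorem hyperexponential_roots_interlace (m : ℕ) (μ σ lam q : ℝ)
    (hσ : 0 < σ) (hlam : 0 < lam) (hq : 0 < q)
    (α : Fin m → ℝ) (hα : ∀ i, 0 < α i) (hαsum : ∑ i, α i = 1)
    (η : Fin m → ℝ) (hηpos : ∀ i, 0 < η i) (hηmono : StrictMono η)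
    (ψ : ℝ → ℝ)
    (hψ : ∀ s, ψ s = μ * s + σ ^ 2 * s ^ 2 / 2 - lam * ∑ i, α i * s / (η i + s)) :
    ∃ ξ : Fin (m + 1) → ℝ,
      (0 < ξ 0) ∧
      (∀ i : Fin m, ξ i.castSucc < η i ∧ η i < ξ i.succ) ∧
      (∀ i, ψ (-ξ i) = q) ∧
      (∀ s : ℝ, s < 0 → (∀ i, s ≠ -η i) → ψ s = q → ∃ i, s = -ξ i) := by
  set F : ℝ → ℝ := fun s => μ * s + σ ^ 2 * s ^ 2 / 2 - lam * ∑ i, α i * s / (η i + s) with hF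
  have hF0 : F 0 = 0 := by simp [hF]
  -- intermediate value step
  have IVT : ∀ a b : ℝ, a ≤ b → (∀ s ∈ Set.Icc a b, ∀ i, η i + s ≠ 0) →
      q ≤ F a → F b ≤ q → ∃ r ∈ Set.Icc a b, F r = q := by
    intro a b hab hne ha hb
    have hcont : ContinuousOn F (Set.Icc a b) := fun s hs =>
      (hyexp_cont m μ σ lam α η (hne s hs)).continuousWithinAt
    obtain ⟨r, hr1, hr2⟩ := intermediate_value_Icc' hab hcont ⟨hb, ha⟩
    exact ⟨r, hr1, hr2⟩
  -- the upper end of each root interval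
  set ub : Fin (m + 1) → ℝ :=
    fun j => if h : j.val = 0 then 0 else -η ⟨j.val - 1, by omega⟩ with hub
  have hub_nonpos : ∀ j, ub j ≤ 0 := by
    intro j
    by_cases h : j.val = 0
    · simp only [hub, dif_pos h, le_refl]
    · simp only [hub, dif_neg h]
      linarith [hηpos ⟨j.val - 1, by omega⟩]
  -- existence of a root below ub j (and above -η j if j < m)
  have hex : ∀ j : Fin (m + 1), ∃ r : ℝ, F r = q ∧ r < ub j ∧
      ∀ h : j.val < m, -η ⟨j.val, h⟩ < r := by
    intro j
    by_cases hjm : j.val < m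
    · set iL : Fin m := ⟨j.val, hjm⟩ with hiL
      -- find b in the open interval with F b < q
      have hbex : ∃ b, F b < q ∧ -η iL < b ∧ b < ub j := by
        by_cases hj0 : j.val = 0
        · have hubj : ub j = 0 := by simp only [hub, dif_pos hj0]
          have hc0 : ContinuousAt F 0 :=
            hyexp_cont m μ σ lam α η (fun i => by simpa using (hηpos i).ne')
          have ev1 : ∀ᶠ s in 𝓝[<] (0:ℝ), F s < q :=
            (Tendsto.eventually_lt_const (by rw [hF0]; exact hq) hc0).filter_mono
              nhdsWithin_le_nhds
          have ev2 : Set.Ioo (-η iL) 0 ∈ 𝓝[<] (0:ℝ) :=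
            Ioo_mem_nhdsLT (by linarith [hηpos iL])
          obtain ⟨b, hb1, hb2⟩ := (ev1.and (eventually_of_mem ev2 fun x hx => hx)).exists
          exact ⟨b, hb1, hb2.1, by rw [hubj]; exact hb2.2⟩
        · set iR : Fin m := ⟨j.val - 1, by omega⟩ with hiR
          have hubj : ub j = -η iR := by simp only [hub, dif_neg hj0, hiR]
          have hRL : η iR < η iL := hηmono (by show j.val - 1 < j.val; omega)
          have ev1 : ∀ᶠ s in 𝓝[<] (-η iR), F s < q :=
            (hyexp_pole_left m μ σ lam hlam α hα η hηpos hηmono iR).eventually_lt_atBot q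
          have ev2 : Set.Ioo (-η iL) (-η iR) ∈ 𝓝[<] (-η iR) :=
            Ioo_mem_nhdsLT (by linarith)
          obtain ⟨b, hb1, hb2⟩ := (ev1.and (eventually_of_mem ev2 fun x hx => hx)).exists
          exact ⟨b, hb1, hb2.1, by rw [hubj]; exact hb2.2⟩
      obtain ⟨b, hbq, hbL, hbU⟩ := hbex
      -- find a ∈ (-η iL, b) with F a > q
      have ev3 : ∀ᶠ s in 𝓝[>] (-η iL), q < F s :=
        (hyexp_pole_right m μ σ lam hlam α hα η hηpos hηmono iL).eventually_gt_atTop q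
      have ev4 : Set.Ioo (-η iL) b ∈ 𝓝[>] (-η iL) := Ioo_mem_nhdsGT hbL
      obtain ⟨a, ha1, ha2⟩ := (ev3.and (eventually_of_mem ev4 fun x hx => hx)).exists
      have hne : ∀ s ∈ Set.Icc a b, ∀ i, η i + s ≠ 0 := by
        intro s hs i
        have hsL : -η iL < s := lt_of_lt_of_le ha2.1 hs.1
        have hsU : s < ub j := lt_of_le_of_lt hs.2 hbU
        by_cases hj0 : j.val = 0
        · have : ub j = 0 := by simp only [hub, dif_pos hj0]
          have hiLle : η iL ≤ η i := hηmono.monotone (by simp [hiL, Fin.le_def]; omega)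
          have : 0 < η i + s := by linarith [hsU, this]
          linarith
        · set iR : Fin m := ⟨j.val - 1, by omega⟩ with hiR
          have hubj : ub j = -η iR := by simp only [hub, dif_neg hj0, hiR]
          rcases le_or_gt i.val iR.val with hle | hlt
          · have : η i ≤ η iR := hηmono.monotone (by exact Fin.le_def.mpr hle)
            have : η i + s < 0 := by rw [hubj] at hsU; linarith
            linarith
          · have : η iL ≤ η i := by
              apply hηmono.monotone
              simp only [Fin.le_def, hiL, hiR] at hlt ⊢
              omega
            have : 0 < η i + s := by linarith
            linarith
      obtain ⟨r, hr1, hr2⟩ := IVT a b (le_of_lt ha2.2) hne (le_of_lt ha1) (le_of_lt hbq)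
      refine ⟨r, hr2, lt_of_le_of_lt hr1.2 hbU, fun h => ?_⟩
      have : (⟨j.val, h⟩ : Fin m) = iL := rfl
      rw [this]
      exact lt_of_lt_of_le ha2.1 hr1.1
    · -- last interval, j.val = m
      have hjm' : j.val = m := by omega
      have hbex : ∃ b, F b < q ∧ b < ub j ∧ (∀ i : Fin m, η i + b < 0) := by
        by_cases hm0 : m = 0
        · subst hm0
          have hj00 : j.val = 0 := by omega
          have hubj : ub j = 0 := by simp [hub, hj00]
          have hc0 : ContinuousAt F 0 :=
            hyexp_cont 0 μ σ lam α η (fun i => i.elim0)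
          have ev1 : ∀ᶠ s in 𝓝[<] (0:ℝ), F s < q :=
            (Tendsto.eventually_lt_const (by rw [hF0]; exact hq) hc0).filter_mono
              nhdsWithin_le_nhds
          obtain ⟨b, hb1, hb2⟩ := (ev1.and self_mem_nhdsWithin).exists
          exact ⟨b, hb1, by rw [hubj]; exact hb2, fun i => i.elim0⟩
        · set iR : Fin m := ⟨m - 1, by omega⟩ with hiR
          have hubj : ub j = -η iR := by
            simp only [hub, dif_neg (show ¬ j.val = 0 by omega), hiR, hjm']
          have ev1 : ∀ᶠ s in 𝓝[<] (-η iR), F s < q :=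
            (hyexp_pole_left m μ σ lam hlam α hα η hηpos hηmono iR).eventually_lt_atBot q
          obtain ⟨b, hb1, hb2⟩ := (ev1.and self_mem_nhdsWithin).exists
          replace hb2 : b < -η iR := hb2
          refine ⟨b, hb1, by rw [hubj]; exact hb2, fun i => ?_⟩
          have : η i ≤ η iR := hηmono.monotone (by simp [Fin.le_def, hiR]; omega)
          linarith
      obtain ⟨b, hbq, hbU, hbneg⟩ := hbex
      have ev3 : ∀ᶠ s in atBot, q < F s :=
        (hyexp_atBot m μ lam hσ hlam α hα hαsum η hηpos).eventually_gt_atTop q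
      obtain ⟨a, ha1, ha2⟩ := (ev3.and (eventually_le_atBot b)).exists
      have hne : ∀ s ∈ Set.Icc a b, ∀ i, η i + s ≠ 0 := by
        intro s hs i
        have : η i + s ≤ η i + b := by linarith [hs.2]
        have := hbneg i
        linarith
      obtain ⟨r, hr1, hr2⟩ := IVT a b ha2 hne (le_of_lt ha1) (le_of_lt hbq)
      exact ⟨r, hr2, lt_of_le_of_lt hr1.2 hbU, fun h => absurd h (by omega)⟩
  choose r hr1 hr2 hr3 using hex
  have hub0 : ub 0 = 0 := by
    simp only [hub]
    rw [dif_pos (by rfl)]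
  have hubsucc : ∀ i : Fin m, ub i.succ = -η i := by
    intro i
    have h1 : (i.succ : Fin (m + 1)).val = i.val + 1 := rfl
    simp only [hub]
    rw [dif_neg (by omega)]
    exact congrArg (fun x => -η x) (Fin.ext (by simp))
  have hleft : ∀ i : Fin m, -η i < r i.castSucc := by
    intro i
    have h := hr3 i.castSucc (by simpa using i.isLt)
    have he : (⟨i.castSucc.val, by simpa using i.isLt⟩ : Fin m) = i := by
      apply Fin.ext; simp
    rwa [he] at h
  have hright : ∀ i : Fin m, r i.succ < -η i := by
    intro i
    have h := hr2 i.succ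
    rwa [hubsucc i] at h
  have hrneg : ∀ j, r j < 0 := fun j => lt_of_lt_of_le (hr2 j) (hub_nonpos j)
  have hanti : StrictMono (fun j : Fin (m + 1) => -(r j)) := by
    rw [Fin.strictMono_iff_lt_succ]
    intro i
    have h1 := hleft i
    have h2 := hright i
    show -(r i.castSucc) < -(r i.succ)
    linarith
  refine ⟨fun j => -(r j), ?_, ?_, ?_, ?_⟩
  · show (0 : ℝ) < -(r 0)
    have := hr2 0
    rw [hub0] at this
    linarith
  · intro i
    refine ⟨?_, ?_⟩
    · show -(r i.castSucc) < η i
      linarith [hleft i]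
    · show η i < -(r i.succ)
      linarith [hright i]
  · intro j
    show ψ (- -(r j)) = q
    rw [neg_neg, hψ]
    exact hr1 j
  · -- exactness
    intro s hs hsne hψs
    by_contra hno
    push_neg at hno
    have hno' : ∀ j, s ≠ r j := by
      intro j h
      exact hno j (by rw [h]; ring)
    have rinj : Function.Injective r := by
      intro a b h
      exact hanti.injective (by simp [h])
    have havoid : ∀ (j : Fin (m + 1)) (i : Fin m), η i + r j ≠ 0 := by
      intro j i h0
      rcases le_or_gt j.val i.val with hle | hlt
      · have h1 : -(r j) ≤ -(r i.castSucc) :=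
          hanti.monotone (by simp [Fin.le_def]; omega)
        have := hleft i
        linarith
      · have h1 : -(r i.succ) ≤ -(r j) :=
          hanti.monotone (by simp [Fin.le_def]; omega)
        have := hright i
        linarith
    -- a positive root
    have hpex : ∃ sp : ℝ, 0 < sp ∧ F sp = q := by
      have ev := (hyexp_atTop m μ lam hσ hlam α hα hαsum η hηpos).eventually_gt_atTop q
      obtain ⟨bp, hbp1, hbp2⟩ := (ev.and (eventually_ge_atTop (0 : ℝ))).exists
      have hcont : ContinuousOn F (Set.Icc 0 bp) := by
        intro x hx
        apply (hyexp_cont m μ σ lam α η ?_).continuousWithinAt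
        intro i
        have h1 := hηpos i
        have h2 := (Set.mem_Icc.1 hx).1
        intro h; linarith
      obtain ⟨sp, hsp1, hsp2⟩ := intermediate_value_Icc hbp2 hcont
        (Set.mem_Icc.2 ⟨by rw [hF0]; exact hq.le, hbp1.le⟩)
      refine ⟨sp, ?_, hsp2⟩
      rcases eq_or_lt_of_le hsp1.1 with h | h
      · exfalso; rw [← h, hF0] at hsp2; linarith
      · exact h
    obtain ⟨sp, hsppos, hspq⟩ := hpex
    -- polynomial root counting
    set P : Polynomial ℝ := hyexpP m μ σ lam q α η with hP
    have hPne : P ≠ 0 := by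
      intro h
      exact hyexpP_eval_zero m μ σ lam q hq α η hηpos (by rw [← hP, h]; simp)
    have hsroot : P.eval s = 0 := by
      apply hyexpP_root
      · intro i h0
        exact hsne i (by linarith)
      · rw [← hψ]; exact hψs
    have hsproot : P.eval sp = 0 := by
      apply hyexpP_root
      · intro i
        have := hηpos i
        intro h; linarith
      · exact hspq
    have hrroot : ∀ j, P.eval (r j) = 0 := by
      intro j
      apply hyexpP_root
      · exact fun i => havoid j i
      · exact hr1 j
    set T : Finset ℝ := insert s (insert sp (Finset.image r univ)) with hT
    have hTsub : T ⊆ P.roots.toFinset := by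
      intro x hx
      rw [Multiset.mem_toFinset, Polynomial.mem_roots hPne]
      simp only [hT, Finset.mem_insert, Finset.mem_image] at hx
      rcases hx with rfl | rfl | ⟨j, -, rfl⟩
      · exact hsroot
      · exact hsproot
      · exact hrroot j
    have hspnotmem : sp ∉ Finset.image r univ := by
      intro hmem
      obtain ⟨j, -, hj⟩ := Finset.mem_image.1 hmem
      have := hrneg j
      rw [hj] at this
      linarith
    have hsnotmem : s ∉ insert sp (Finset.image r univ) := by
      intro hmem
      rcases Finset.mem_insert.1 hmem with h | h
      · rw [h] at hs; linarith
      · obtain ⟨j, -, hj⟩ := Finset.mem_image.1 h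
        exact hno' j hj.symm
    have hTcard : T.card = m + 3 := by
      rw [hT, Finset.card_insert_of_notMem hsnotmem,
        Finset.card_insert_of_notMem hspnotmem,
        Finset.card_image_of_injective _ rinj, card_univ, Fintype.card_fin]
    have h1 : T.card ≤ P.roots.toFinset.card := Finset.card_le_card hTsub
    have h2 : P.roots.toFinset.card ≤ Multiset.card P.roots := Multiset.toFinset_card_le _
    have h3 : Multiset.card P.roots ≤ P.natDegree := Polynomial.card_roots' P
    have h4 : P.natDegree ≤ m + 2 := hyexpP_natDegree m μ σ lam q α η
    omega
end
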